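/- arXiv:cs/0609009 — 4 statements merged into one kernel-verified Lean document; each statement's English description precedes it below -/
import Mathlib

section
/- Let G be a graph with real vertex weights, and for each pair (U, U') of vertex subsets inducing cliques, define the maximum witness as the maximum-weight b-subset U'' such that U ∪ U'' and U'' ∪ U' each induce cliques. If U ∪ U' induces a clique of size a + c and U'' is a maximum-weight b-subset with U ∪ U'', U'' ∪ U' inducing cliques of sizes a+b and b+c respectively, and moreover U ∪ U' ∪ U'' induces a clique on a+b+c vertices, then the weight of U ∪ U' ∪ U'' is the maximum weight over all (a+b+c)-cliques of G containing U ∪ U'. -/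
open Finset

/-- If `U ∪ U'` induces an `(a+c)`-clique, `U''` is a maximum-weight `b`-set such that
`U ∪ U''` and `U'' ∪ U'` induce cliques of sizes `a+b` and `b+c`, and `U ∪ U' ∪ U''`
induces an `(a+b+c)`-clique, then the weight of `U ∪ U' ∪ U''` is the maximum weight over
all `(a+b+c)`-cliques of `G` containing `U ∪ U'`. -/
theorem maxWitness_heaviest_clique {V : Type*} [Fintype V] [DecidableEq V]
    (G : SimpleGraph V) (w : V → ℝ) (a b c : ℕ) (ha : 0 < a) (hb : 0 < b) (hc : 0 < c)
    (U U' U'' : Finset V) (hU : U.card = a) (hU' : U'.card = c) (hU'' : U''.card = b)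
    (hUU' : G.IsNClique (a + c) (U ∪ U'))
    (hUU'' : G.IsNClique (a + b) (U ∪ U''))
    (hU''U' : G.IsNClique (b + c) (U'' ∪ U'))
    (hmax : ∀ W : Finset V, W.card = b → G.IsNClique (a + b) (U ∪ W) →
      G.IsNClique (b + c) (W ∪ U') → ∑ v ∈ W, w v ≤ ∑ v ∈ U'', w v)
    (hall : G.IsNClique (a + b + c) (U ∪ U' ∪ U'')) :
    IsGreatest {x : ℝ | ∃ S : Finset V, G.IsNClique (a + b + c) S ∧ U ∪ U' ⊆ S ∧
        x = ∑ v ∈ S, w v}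
      (∑ v ∈ U ∪ U' ∪ U'', w v) := by
  have hdisj : Disjoint (U ∪ U') U'' := by
    rw [← Finset.card_union_eq_card_add_card]
    rw [hall.card_eq, hUU'.card_eq, hU'']
    ring
  constructor
  · exact ⟨U ∪ U' ∪ U'', hall, Finset.subset_union_left, rfl⟩
  · rintro x ⟨S, hS, hsub, rfl⟩
    set W : Finset V := S \ (U ∪ U') with hW
    have hWdisj : Disjoint (U ∪ U') W := Finset.disjoint_sdiff
    have hSW : U ∪ U' ∪ W = S := Finset.union_sdiff_of_subset hsub
    have hWcard : W.card = b := by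
      have h1 := hS.card_eq
      have h2 := hUU'.card_eq
      have h3 := Finset.card_sdiff_of_subset hsub
      rw [hW]
      omega
    have hWS : W ⊆ S := Finset.sdiff_subset
    have hUW : G.IsNClique (a + b) (U ∪ W) := by
      constructor
      · exact hS.isClique.subset (Finset.union_subset
          ((Finset.subset_union_left).trans hsub) hWS)
      · rw [Finset.card_union_of_disjoint, hU, hWcard]
        exact (Finset.disjoint_union_left.mp hWdisj).1
    have hWU' : G.IsNClique (b + c) (W ∪ U') := by
      constructor
      · exact hS.isClique.subset (Finset.union_subset hWS
          ((Finset.subset_union_right).trans hsub))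
      · rw [Finset.card_union_of_disjoint, hU', hWcard]
        exact ((Finset.disjoint_union_left.mp hWdisj).2).symm
    have hle := hmax W hWcard hUW hWU'
    calc ∑ v ∈ S, w v = ∑ v ∈ U ∪ U', w v + ∑ v ∈ W, w v := by
          rw [← hSW, Finset.sum_union hWdisj]
      _ ≤ ∑ v ∈ U ∪ U', w v + ∑ v ∈ U'', w v := by linarith
      _ = ∑ v ∈ U ∪ U' ∪ U'', w v := (Finset.sum_union hdisj).symm
end

section
/- Let ω be a real number with 2 ≤ ω < 3 and define t(ω,h) via the optimization program with s₁ and s₂ as in the paper. Then t(ω,h)/h → 3/(6-ω) as h → ∞; in particular, since ω < 2.376, t(ω,h) < 0.828·h for all sufficiently large h. -/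
/-- `b₁` is the largest natural number `b` with `b/(4-ω) ≤ ⌊(h-b)/2⌋`. -/
noncomputable def b1 (ω : ℝ) (h : ℕ) : ℕ :=
  sSup {b : ℕ | (b : ℝ) / (4 - ω) ≤ (((h - b) / 2 : ℕ) : ℝ)}

/-- `s₁ = h - b₁ + b₁/(4-ω)`. -/
noncomputable def s1 (ω : ℝ) (h : ℕ) : ℝ :=
  (h : ℝ) - (b1 ω h : ℝ) + (b1 ω h : ℝ) / (4 - ω)

/-- `s₂ = min over integers b with ⌊(h-b)/2⌋ ≤ b ≤ h-2 of
`max{h - b + ⌊(h-b)/2⌋, h - (3-ω)⌊(h-b)/2⌋}`. -/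
noncomputable def s2 (ω : ℝ) (h : ℕ) : ℝ :=
  sInf {x : ℝ | ∃ b : ℕ, (h - b) / 2 ≤ b ∧ b ≤ h - 2 ∧
    x = max ((h : ℝ) - (b : ℝ) + (((h - b) / 2 : ℕ) : ℝ))
            ((h : ℝ) - (3 - ω) * (((h - b) / 2 : ℕ) : ℝ))}

/-- `t(ω,h) = min{s₁, s₂}`. -/
noncomputable def tExp (ω : ℝ) (h : ℕ) : ℝ := min (s1 ω h) (s2 ω h)

lemma b1_mem_aux (ω : ℝ) (hω3 : ω < 3) (h : ℕ) :
    ((b1 ω h : ℝ)) / (4 - ω) ≤ (((h - b1 ω h) / 2 : ℕ) : ℝ) := by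
  have h4 : (0:ℝ) < 4 - ω := by linarith
  have hne : ({b : ℕ | (b : ℝ) / (4 - ω) ≤ (((h - b) / 2 : ℕ) : ℝ)}).Nonempty := by
    exact ⟨0, by simp⟩
  have hbdd : BddAbove {b : ℕ | (b : ℝ) / (4 - ω) ≤ (((h - b) / 2 : ℕ) : ℝ)} := by
    refine ⟨h, fun b hb => ?_⟩
    by_contra hbh
    push_neg at hbh
    have hz : h - b = 0 := Nat.sub_eq_zero_of_le (le_of_lt hbh)
    simp only [Set.mem_setOf_eq, hz] at hb
    norm_num at hb
    have : (b:ℝ) ≤ 0 := by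
      have := (div_nonpos_iff.mp (le_trans hb (le_of_eq rfl)))
      rcases div_nonpos_iff.mp hb with ⟨h1, h2⟩ | ⟨h1, h2⟩
      · linarith
      · exact h1
    have : b = 0 := by exact_mod_cast le_antisymm this (Nat.cast_nonneg b)
    omega
  exact Nat.sSup_mem hne hbdd

lemma b1_le_h (ω : ℝ) (hω3 : ω < 3) (h : ℕ) : b1 ω h ≤ h := by
  have h4 : (0:ℝ) < 4 - ω := by linarith
  have hm := b1_mem_aux ω hω3 h
  by_contra hbh
  push_neg at hbh
  have hz : h - b1 ω h = 0 := Nat.sub_eq_zero_of_le (le_of_lt hbh)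
  rw [hz] at hm
  norm_num at hm
  have : ((b1 ω h : ℕ):ℝ) ≤ 0 := by
    rcases div_nonpos_iff.mp hm with ⟨h1, h2⟩ | ⟨h1, h2⟩
    · linarith
    · exact h1
  have : b1 ω h = 0 := by exact_mod_cast le_antisymm this (Nat.cast_nonneg _)
  omega

lemma s1_lower (ω : ℝ) (hω3 : ω < 3) (h : ℕ) :
    3 * (h:ℝ) / (6 - ω) ≤ s1 ω h := by
  have h4 : (0:ℝ) < 4 - ω := by linarith
  have h6 : (0:ℝ) < 6 - ω := by linarith
  have hm := b1_mem_aux ω hω3 h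
  have hbh := b1_le_h ω hω3 h
  set B : ℝ := (b1 ω h : ℝ) with hB
  have hcast : (((h - b1 ω h) : ℕ) : ℝ) = (h:ℝ) - B := by
    rw [Nat.cast_sub hbh]
  have hdiv : ((((h - b1 ω h) / 2 : ℕ)) : ℝ) ≤ ((h:ℝ) - B) / 2 := by
    rw [← hcast]
    exact Nat.cast_div_le
  have hkey : B / (4 - ω) ≤ ((h:ℝ) - B) / 2 := le_trans hm hdiv
  set C : ℝ := B / (4 - ω) with hC
  have hCB : C * (4 - ω) = B := div_mul_cancel₀ B (ne_of_gt h4)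
  have hC2 : 2 * C ≤ (h:ℝ) - B := by linarith [hkey]
  have hCH : C * (6 - ω) ≤ (h:ℝ) := by nlinarith
  -- s1 = h - B + C ; goal : 3h/(6-ω) ≤ h - B + C
  show 3 * (h:ℝ) / (6 - ω) ≤ (h:ℝ) - B + C
  rw [div_le_iff₀ h6]
  nlinarith [mul_le_mul_of_nonneg_left hCH (show (0:ℝ) ≤ 3 - ω by linarith)]

lemma s2_lower (ω : ℝ) (hω3 : ω < 3) (h : ℕ) (hh : 3 ≤ h) :
    3 * (h:ℝ) / (6 - ω) ≤ s2 ω h := by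
  have h6 : (0:ℝ) < 6 - ω := by linarith
  apply le_csInf
  · refine ⟨_, h - 2, ?_, le_refl _, rfl⟩
    have : h - (h - 2) = 2 := by omega
    rw [this]
    omega
  · rintro x ⟨b, hmb, hbh2, rfl⟩
    have hbh : b ≤ h := by omega
    set m : ℕ := (h - b) / 2 with hm
    have hcast : (((h - b) : ℕ) : ℝ) = (h:ℝ) - (b:ℝ) := by rw [Nat.cast_sub hbh]
    have h2m : 2 * m ≤ h - b := by omega
    have h2m' : 2 * (m:ℝ) ≤ (h:ℝ) - (b:ℝ) := by
      rw [← hcast]; exact_mod_cast h2m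
    rcases le_total ((h:ℝ) / (6 - ω)) (m:ℝ) with hc | hc
    · refine le_trans ?_ (le_max_left _ _)
      have : 3 * ((h:ℝ) / (6 - ω)) ≤ 3 * (m:ℝ) := by linarith
      have e : 3 * (h:ℝ) / (6 - ω) = 3 * ((h:ℝ) / (6 - ω)) := by ring
      linarith
    · refine le_trans ?_ (le_max_right _ _)
      have h3ω : (0:ℝ) ≤ 3 - ω := by linarith
      have key : (h:ℝ) - (3 - ω) * ((h:ℝ) / (6 - ω)) = 3 * (h:ℝ) / (6 - ω) := by
        field_simp
        ring
      nlinarith [mul_le_mul_of_nonneg_left hc h3ω]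

lemma tExp_upper (ω : ℝ) (hω2 : 2 ≤ ω) (hω : ω < 2.376) (h : ℕ) (hh : 20 ≤ h) :
    tExp ω h ≤ 3 * (h:ℝ) / (6 - ω) + 3 := by
  have h6 : (0:ℝ) < 6 - ω := by linarith [hω]
  have h3ω : (0:ℝ) ≤ 3 - ω := by nlinarith [hω]
  have hH : (0:ℝ) < (h:ℝ) := by exact_mod_cast Nat.lt_of_lt_of_le (by norm_num) hh
  have hH20 : (20:ℝ) ≤ (h:ℝ) := by exact_mod_cast hh
  set m : ℕ := ⌈(h:ℝ) / (6 - ω)⌉₊ with hmdef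
  have hm1 : 1 ≤ m := Nat.one_le_iff_ne_zero.mpr (by
    have : 0 < m := Nat.ceil_pos.mpr (div_pos hH h6)
    omega)
  have hmge : (h:ℝ) / (6 - ω) ≤ (m:ℝ) := Nat.le_ceil _
  have hmle : (m:ℝ) < (h:ℝ) / (6 - ω) + 1 :=
    Nat.ceil_lt_add_one (le_of_lt (div_pos hH h6))
  have hmge' : (h:ℝ) ≤ (m:ℝ) * (6 - ω) := by
    rw [div_le_iff₀ h6] at hmge; exact hmge
  have hmle' : (m:ℝ) * (6 - ω) ≤ (h:ℝ) + (6 - ω) := by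
    have e : ((h:ℝ) / (6 - ω) + 1) * (6 - ω) = (h:ℝ) + (6 - ω) := by
      field_simp
    nlinarith [hmle]
  have h3mR : 3 * (m:ℝ) ≤ (h:ℝ) := by
    nlinarith [hmle', mul_le_mul_of_nonneg_left hH20 h3ω]
  have h3m : 3 * m ≤ h := by exact_mod_cast h3mR
  have h2m : 2 * m ≤ h := by omega
  set b : ℕ := h - 2 * m with hbdef
  have hhb : h - b = 2 * m := by omega
  have hdiv2 : (h - b) / 2 = m := by omega
  have hBcast : (b:ℝ) = (h:ℝ) - 2 * (m:ℝ) := by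
    rw [hbdef, Nat.cast_sub h2m]; push_cast; ring
  -- the candidate value
  have hmem : (max ((h : ℝ) - (b : ℝ) + (((h - b) / 2 : ℕ) : ℝ))
            ((h : ℝ) - (3 - ω) * (((h - b) / 2 : ℕ) : ℝ))) ∈
      {x : ℝ | ∃ b : ℕ, (h - b) / 2 ≤ b ∧ b ≤ h - 2 ∧
        x = max ((h : ℝ) - (b : ℝ) + (((h - b) / 2 : ℕ) : ℝ))
                ((h : ℝ) - (3 - ω) * (((h - b) / 2 : ℕ) : ℝ))} := by
    exact ⟨b, by omega, by omega, rfl⟩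
  have hbdd : BddBelow {x : ℝ | ∃ b : ℕ, (h - b) / 2 ≤ b ∧ b ≤ h - 2 ∧
        x = max ((h : ℝ) - (b : ℝ) + (((h - b) / 2 : ℕ) : ℝ))
                ((h : ℝ) - (3 - ω) * (((h - b) / 2 : ℕ) : ℝ))} := by
    refine ⟨0, ?_⟩
    rintro x ⟨b', hmb', hbh2', rfl⟩
    have hb'h : (b':ℝ) ≤ (h:ℝ) := by exact_mod_cast (by omega : b' ≤ h)
    refine le_trans ?_ (le_max_left _ _)
    have : (0:ℝ) ≤ (((h - b') / 2 : ℕ) : ℝ) := Nat.cast_nonneg _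
    linarith
  have hs2le := csInf_le hbdd hmem
  refine le_trans (min_le_right _ _) (le_trans hs2le ?_)
  rw [hdiv2, hBcast]
  apply max_le
  · -- h - (h - 2m) + m = 3m ≤ 3h/(6-ω) + 3
    have e1 : 3 * (h:ℝ) / (6 - ω) + 3 = (3 * (h:ℝ) + 3 * (6 - ω)) / (6 - ω) := by
      field_simp
    rw [e1, le_div_iff₀ h6]
    nlinarith [hmle']
  · -- h - (3-ω)m ≤ 3h/(6-ω) ≤ 3h/(6-ω) + 3
    have key : ((h:ℝ) - (3 - ω) * (m:ℝ)) * (6 - ω) ≤ 3 * (h:ℝ) := by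
      nlinarith [mul_le_mul_of_nonneg_left hmge' h3ω]
    have : (h:ℝ) - (3 - ω) * (m:ℝ) ≤ 3 * (h:ℝ) / (6 - ω) := by
      rw [le_div_iff₀ h6]; exact key
    linarith


open Filter in
/-- As `h → ∞`, `t(ω,h)/h → 3/(6-ω)`; in particular, since `ω < 2.376`,
`t(ω,h) < 0.828·h` for all sufficiently large `h`. -/
theorem tExp_asymptotics (ω : ℝ) (hω2 : 2 ≤ ω) (hω : ω < 2.376) :
    Tendsto (fun h : ℕ => tExp ω h / (h : ℝ)) atTop (nhds (3 / (6 - ω))) ∧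
      ∀ᶠ h : ℕ in atTop, tExp ω h < 0.828 * (h : ℝ) := by
  have hω3 : ω < 3 := by nlinarith
  have h6 : (0:ℝ) < 6 - ω := by linarith
  have hupper : Tendsto (fun h : ℕ => 3 / (6 - ω) + 3 / (h:ℝ)) atTop
      (nhds (3 / (6 - ω))) := by
    have : Tendsto (fun _ : ℕ => 3 / (6 - ω)) atTop (nhds (3 / (6 - ω))) :=
      tendsto_const_nhds
    have h2 : Tendsto (fun h : ℕ => 3 / (h:ℝ)) atTop (nhds 0) :=
      tendsto_const_div_atTop_nhds_zero_nat 3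
    simpa using this.add h2
  have hmain : Tendsto (fun h : ℕ => tExp ω h / (h : ℝ)) atTop (nhds (3 / (6 - ω))) := by
    apply tendsto_of_tendsto_of_tendsto_of_le_of_le'
      (tendsto_const_nhds) hupper
    · filter_upwards [eventually_ge_atTop 3] with h hh
      have hHpos : (0:ℝ) < (h:ℝ) := by exact_mod_cast Nat.lt_of_lt_of_le (by norm_num) hh
      have hlo : 3 * (h:ℝ) / (6 - ω) ≤ tExp ω h :=
        le_min (s1_lower ω hω3 h) (s2_lower ω hω3 h hh)
      rw [le_div_iff₀ hHpos, div_mul_eq_mul_div]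
      exact hlo
    · filter_upwards [eventually_ge_atTop 20] with h hh
      have hHpos : (0:ℝ) < (h:ℝ) := by exact_mod_cast Nat.lt_of_lt_of_le (by norm_num) hh
      have hup := tExp_upper ω hω2 hω h hh
      rw [div_le_iff₀ hHpos]
      have e : (3 / (6 - ω) + 3 / (h:ℝ)) * (h:ℝ) = 3 * (h:ℝ) / (6 - ω) + 3 := by
        field_simp
      rw [e]
      exact hup
  refine ⟨hmain, ?_⟩
  have hc : 3 / (6 - ω) < 0.828 := by
    rw [div_lt_iff₀ h6]
    nlinarith
  have hev : ∀ᶠ h : ℕ in atTop, tExp ω h / (h:ℝ) < 0.828 :=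
    hmain.eventually_lt_const hc
  filter_upwards [hev, eventually_ge_atTop 1] with h hlt hh1
  have hHpos : (0:ℝ) < (h:ℝ) := by exact_mod_cast Nat.lt_of_lt_of_le (by norm_num) hh1
  calc tExp ω h = tExp ω h / (h:ℝ) * (h:ℝ) := by field_simp
    _ < 0.828 * (h:ℝ) := by
        exact mul_lt_mul_of_pos_right hlt hHpos
end

section
/- Let G be a graph with real edge weights and let a, b, c be positive integers with a+b+c = h. Define matrix A indexed by a-cliques × b-cliques with A[U,U'] = (sum of weights of edges induced by U ∪ U') if U ∪ U' induces a clique of size a+b, else −∞; and B indexed by b-cliques × c-cliques with B[U',U''] = (sum of weights of edges induced by U' ∪ U'' having at least one endpoint in U'') if U' ∪ U'' induces a clique of size b+c, else −∞. Let C = A ⋆ B be the MAX-distance product. Then for every pair (U, U'') with U ∪ U'' inducing a clique of size a+c, the quantity C[U,U''] + (sum of weights of edges between U and U'') equals the maximum total edge weight of an h-clique of G containing U ∪ U'' (and is −∞ if no such h-clique exists). -/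
open Finset

/-- The total weight of the edges induced by a vertex set `S` (each unordered pair counted
once), assuming `w` is symmetric and `S` induces a clique. -/
noncomputable def cliqueWeight {V : Type*} [DecidableEq V] (w : V → V → ℝ) (S : Finset V) : ℝ :=
  (∑ p ∈ S.offDiag, w p.1 p.2) / 2

/-- The total weight of the edges between `X` and `Y` (for disjoint `X`, `Y`). -/
noncomputable def crossWeight {V : Type*} (w : V → V → ℝ) (X Y : Finset V) : ℝ :=
  ∑ x ∈ X, ∑ y ∈ Y, w x y

lemma sum_offDiag_eq {V : Type*} [DecidableEq V] (w : V → V → ℝ) (S : Finset V) :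
    ∑ p ∈ S.offDiag, w p.1 p.2 = (∑ x ∈ S, ∑ y ∈ S, w x y) - ∑ x ∈ S, w x x := by
  have h1 : ∑ x ∈ S, ∑ y ∈ S, w x y = ∑ p ∈ S ×ˢ S, w p.1 p.2 := by
    rw [Finset.sum_product]
  rw [h1, ← Finset.diag_union_offDiag (s := S),
    Finset.sum_union (Finset.disjoint_diag_offDiag _), Finset.sum_diag]
  ring

lemma cliqueWeight_union {V : Type*} [DecidableEq V] (w : V → V → ℝ)
    (hw : ∀ x y, w x y = w y x) {X Y : Finset V} (hd : Disjoint X Y) :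
    cliqueWeight w (X ∪ Y) = cliqueWeight w X + cliqueWeight w Y + crossWeight w X Y := by
  have hYX : crossWeight w Y X = crossWeight w X Y := by
    unfold crossWeight
    rw [Finset.sum_comm]
    exact Finset.sum_congr rfl fun x _ => Finset.sum_congr rfl fun y _ => hw y x
  unfold cliqueWeight
  rw [sum_offDiag_eq, sum_offDiag_eq, sum_offDiag_eq,
    Finset.sum_union hd, Finset.sum_union hd]
  have : ∀ x ∈ X, ∑ y ∈ X ∪ Y, w x y = ∑ y ∈ X, w x y + ∑ y ∈ Y, w x y :=
    fun x _ => Finset.sum_union hd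
  rw [Finset.sum_congr rfl this,
    Finset.sum_congr rfl (fun x (_ : x ∈ Y) => (Finset.sum_union hd : ∑ y ∈ X ∪ Y, w x y = _))]
  have h2 : crossWeight w X Y = ∑ x ∈ X, ∑ y ∈ Y, w x y := rfl
  have h3 : crossWeight w Y X = ∑ x ∈ Y, ∑ y ∈ X, w x y := rfl
  rw [Finset.sum_add_distrib, Finset.sum_add_distrib]
  rw [← h2, ← h3, hYX]
  ring

lemma crossWeight_union_left {V : Type*} (w : V → V → ℝ) {X Y : Finset V} (Z : Finset V)
    [DecidableEq V] (hd : Disjoint X Y) :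
    crossWeight w (X ∪ Y) Z = crossWeight w X Z + crossWeight w Y Z :=
  Finset.sum_union hd

lemma key_weight {V : Type*} [DecidableEq V] (w : V → V → ℝ) (hw : ∀ x y, w x y = w y x)
    {U U' W : Finset V} (dUU' : Disjoint U U') (dU'W : Disjoint U' W) (dUW : Disjoint U W) :
    cliqueWeight w (U ∪ U' ∪ W)
      = cliqueWeight w (U ∪ U') + (cliqueWeight w W + crossWeight w U' W)
        + crossWeight w U W := by
  rw [cliqueWeight_union w hw (Finset.disjoint_union_left.2 ⟨dUW, dU'W⟩),
    crossWeight_union_left w W dUU']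
  ring

lemma isClique_triple_union {V : Type*} [DecidableEq V] (G : SimpleGraph V) {U U' W : Finset V}
    (h1 : G.IsClique ↑(U ∪ U')) (h2 : G.IsClique ↑(U' ∪ W)) (h3 : G.IsClique ↑(U ∪ W)) :
    G.IsClique ↑(U ∪ U' ∪ W) := by
  intro x hx y hy hxy
  simp only [Finset.coe_union, Set.mem_union, Finset.mem_coe] at hx hy
  rcases hx with (hx | hx) | hx <;> rcases hy with (hy | hy) | hy
  · exact h1 (by simp [hx]) (by simp [hy]) hxy
  · exact h1 (by simp [hx]) (by simp [hy]) hxy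
  · exact h3 (by simp [hx]) (by simp [hy]) hxy
  · exact h1 (by simp [hx]) (by simp [hy]) hxy
  · exact h1 (by simp [hx]) (by simp [hy]) hxy
  · exact h2 (by simp [hx]) (by simp [hy]) hxy
  · exact h3 (by simp [hx]) (by simp [hy]) hxy
  · exact h2 (by simp [hx]) (by simp [hy]) hxy
  · exact h2 (by simp [hx]) (by simp [hy]) hxy

open scoped Classical in
/-- Correctness of the distance-product reduction for heaviest `h`-cliques: for any
`a`-clique `U` and `c`-clique `W` with `U ∪ W` an `(a+c)`-clique, the MAX-distance-product
entry (the sup over `b`-cliques `U'` of `A[U,U'] + B[U',W]`) plus the weight of the edges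
between `U` and `W` equals the maximum total edge weight of an `h`-clique containing
`U ∪ W` (and is `-∞` if no such `h`-clique exists). -/
theorem maxDistanceProduct_heaviest_clique {V : Type*} [Fintype V] [DecidableEq V]
    (G : SimpleGraph V) (w : V → V → ℝ) (hw : ∀ x y, w x y = w y x)
    (a b c h : ℕ) (ha : 0 < a) (hb : 0 < b) (hc : 0 < c) (hh : a + b + c = h)
    (U W : Finset V) (hU : G.IsNClique a U) (hW : G.IsNClique c W)
    (hUW : G.IsNClique (a + c) (U ∪ W)) :
    (⨆ U' : Finset V,
        if U'.card = b ∧ G.IsNClique (a + b) (U ∪ U') ∧ G.IsNClique (b + c) (U' ∪ W) then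
          ((cliqueWeight w (U ∪ U') + (cliqueWeight w W + crossWeight w U' W) : ℝ) : EReal)
        else ⊥) + ((crossWeight w U W : ℝ) : EReal) =
      ⨆ S : Finset V,
        if G.IsNClique h S ∧ U ∪ W ⊆ S then ((cliqueWeight w S : ℝ) : EReal) else ⊥ := by
  have dUW : Disjoint U W :=
    Finset.card_union_eq_card_add_card.1 (by rw [hUW.card_eq, hU.card_eq, hW.card_eq])
  apply le_antisymm
  · rw [← EReal.le_sub_iff_add_le (Or.inl (EReal.coe_ne_bot _)) (Or.inl (EReal.coe_ne_top _))]
    apply iSup_le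
    intro U'
    rw [EReal.le_sub_iff_add_le (Or.inl (EReal.coe_ne_bot _)) (Or.inl (EReal.coe_ne_top _))]
    by_cases hcond : U'.card = b ∧ G.IsNClique (a + b) (U ∪ U') ∧ G.IsNClique (b + c) (U' ∪ W)
    · rw [if_pos hcond]
      obtain ⟨hU'b, hAB, hBC⟩ := hcond
      have dUU' : Disjoint U U' :=
        Finset.card_union_eq_card_add_card.1 (by rw [hAB.card_eq, hU.card_eq, hU'b])
      have dU'W : Disjoint U' W :=
        Finset.card_union_eq_card_add_card.1 (by rw [hBC.card_eq, hU'b, hW.card_eq])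
      have hSclique : G.IsNClique h (U ∪ U' ∪ W) := by
        constructor
        · exact isClique_triple_union G hAB.1 hBC.1 hUW.1
        · rw [Finset.card_union_of_disjoint (Finset.disjoint_union_left.2 ⟨dUW, dU'W⟩),
            hAB.card_eq, hW.card_eq, ← hh]
      have hsub : U ∪ W ⊆ U ∪ U' ∪ W :=
        Finset.union_subset (Finset.subset_union_left.trans Finset.subset_union_left)
          Finset.subset_union_right
      refine le_trans ?_ (le_iSup _ (U ∪ U' ∪ W))
      rw [if_pos ⟨hSclique, hsub⟩, ← EReal.coe_add]
      exact EReal.coe_le_coe_iff.2 (le_of_eq (key_weight w hw dUU' dU'W dUW).symm)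
    · rw [if_neg hcond, EReal.bot_add]
      exact bot_le
  · apply iSup_le
    intro S
    by_cases hcond : G.IsNClique h S ∧ U ∪ W ⊆ S
    · rw [if_pos hcond]
      obtain ⟨hS, hsub⟩ := hcond
      set U' := S \ (U ∪ W) with hU'def
      have hU'b : U'.card = b := by
        rw [hU'def, Finset.card_sdiff_of_subset hsub, hS.card_eq, hUW.card_eq]
        omega
      have dbig : Disjoint (U ∪ W) U' := Finset.sdiff_disjoint.symm
      have dUU' : Disjoint U U' := dbig.mono_left Finset.subset_union_left
      have dU'W : Disjoint U' W := (dbig.mono_left Finset.subset_union_right).symm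
      have hSeq : U ∪ U' ∪ W = S := by
        rw [Finset.union_right_comm, Finset.union_sdiff_of_subset hsub]
      have hAB : G.IsNClique (a + b) (U ∪ U') := by
        constructor
        · exact hS.1.subset (Finset.coe_subset.2 (hSeq ▸ Finset.subset_union_left))
        · rw [Finset.card_union_of_disjoint dUU', hU.card_eq, hU'b]
      have hBC : G.IsNClique (b + c) (U' ∪ W) := by
        constructor
        · refine hS.1.subset (Finset.coe_subset.2 ?_)
          rw [← hSeq]
          exact Finset.union_subset
            (Finset.subset_union_right.trans Finset.subset_union_left)
            Finset.subset_union_right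
        · rw [Finset.card_union_of_disjoint dU'W, hU'b, hW.card_eq]
      have hval : (cliqueWeight w S : EReal)
          = ((cliqueWeight w (U ∪ U') + (cliqueWeight w W + crossWeight w U' W) : ℝ) : EReal)
            + ((crossWeight w U W : ℝ) : EReal) := by
        rw [← EReal.coe_add, ← hSeq, key_weight w hw dUU' dU'W dUW]
      rw [hval]
      refine add_le_add_left (le_trans (le_of_eq ?_) (le_iSup _ U')) _
      rw [if_pos ⟨hU'b, hAB, hBC⟩]
    · rw [if_neg hcond]
      exact bot_le
end

section
/- Let G be a graph with vertices colored by colors {1,...,k} where k is even, and let C₁, C₂ partition the color set. For each pair (u,v), let D_{C₁,C₂}[u,v] be the maximum weight of a path of length k−1 from u to v whose first k/2 vertices have all distinct colors from C₁ and last k/2 vertices have all distinct colors from C₂ (−∞ if none exists). Then the maximum weight of a colorful path of length k−1 between u and v (using all k colors) equals the maximum of D_{C₁,C₂}[u,v] over all partitions (C₁, C₂) of {1,...,k} with |C₁| = |C₂| = k/2. -/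
open Finset

/-- Divide-and-conquer correctness for heaviest colorful paths: the maximum weight of a
colorful path of length `k-1` from `u` to `v` (using all `k` colors) equals the maximum,
over partitions of the color set into halves `C₁, C₁ᶜ` of size `k/2`, of the maximum
weight of a path whose first `k/2` vertices have distinct colors from `C₁` and whose last
`k/2` vertices have distinct colors from `C₁ᶜ`. -/
theorem colorful_path_divide_conquer {V : Type*} [Fintype V] (G : SimpleGraph V)
    [DecidableRel G.Adj] (w : V → V → ℝ) (hw : ∀ x y, w x y = w y x)
    (k : ℕ) (hk : 2 ≤ k) (hkeven : Even k) (col : V → Fin k) (u v : V) :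
    (⨆ x ∈ {x : ℝ | ∃ p : ℕ → V, p 1 = u ∧ p k = v ∧
        (∀ i, 1 ≤ i → i < k → G.Adj (p i) (p (i + 1))) ∧
        (∀ i j, 1 ≤ i → i < j → j ≤ k → col (p i) ≠ col (p j)) ∧
        x = ∑ i ∈ Finset.Ico 1 k, w (p i) (p (i + 1))}, (x : EReal)) =
      ⨆ C₁ : Finset (Fin k), if C₁.card = k / 2 then
        (⨆ x ∈ {x : ℝ | ∃ p : ℕ → V, p 1 = u ∧ p k = v ∧
          (∀ i, 1 ≤ i → i < k → G.Adj (p i) (p (i + 1))) ∧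
          (∀ i, 1 ≤ i → i ≤ k / 2 → col (p i) ∈ C₁) ∧
          (∀ i, k / 2 < i → i ≤ k → col (p i) ∈ C₁ᶜ) ∧
          (∀ i j, 1 ≤ i → i < j → j ≤ k / 2 → col (p i) ≠ col (p j)) ∧
          (∀ i j, k / 2 < i → i < j → j ≤ k → col (p i) ≠ col (p j)) ∧
          x = ∑ i ∈ Finset.Ico 1 k, w (p i) (p (i + 1))}, (x : EReal))
      else ⊥ := by
  have hhalf : k / 2 < k := Nat.div_lt_self (by omega) (by omega)
  apply le_antisymm
  · refine iSup₂_le ?_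
    rintro x ⟨p, hpu, hpv, hadj, hcol, hx⟩
    set C₁ : Finset (Fin k) := (Finset.Ico 1 (k / 2 + 1)).image (fun i => col (p i)) with hC₁
    have hcard : C₁.card = k / 2 := by
      rw [hC₁, Finset.card_image_of_injOn, Nat.card_Ico]
      · omega
      intro a ha b hb hab
      simp only [Finset.coe_Ico, Set.mem_Ico] at ha hb
      by_contra hne
      rcases Nat.lt_or_ge a b with h | h
      · exact hcol a b ha.1 h (by omega) hab
      · exact hcol b a hb.1 (lt_of_le_of_ne h (Ne.symm hne)) (by omega) hab.symm
    refine le_trans ?_ (le_iSup _ C₁)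
    rw [if_pos hcard]
    refine le_iSup₂_of_le x ?_ le_rfl
    refine ⟨p, hpu, hpv, hadj, ?_, ?_, ?_, ?_, hx⟩
    · intro i h1 h2
      exact Finset.mem_image.2 ⟨i, Finset.mem_Ico.2 ⟨h1, by omega⟩, rfl⟩
    · intro i h1 h2
      simp only [hC₁, Finset.mem_compl, Finset.mem_image, Finset.mem_Ico, not_exists]
      rintro j ⟨⟨hj1, hj2⟩, hEq⟩
      exact hcol j i hj1 (by omega) h2 hEq
    · intro i j h1 h2 h3
      exact hcol i j h1 h2 (by omega)
    · intro i j h1 h2 h3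
      exact hcol i j (by omega) h2 h3
  · refine iSup_le fun C₁ => ?_
    split_ifs with hcard
    · refine iSup₂_le ?_
      rintro x ⟨p, hpu, hpv, hadj, hin, hout, hd1, hd2, hx⟩
      refine le_iSup₂_of_le x ⟨p, hpu, hpv, hadj, ?_, hx⟩ le_rfl
      intro i j h1 h2 h3
      rcases le_or_gt j (k / 2) with hj | hj
      · exact hd1 i j h1 h2 hj
      rcases le_or_gt i (k / 2) with hi | hi
      · have h₁ := hin i h1 hi
        have h₂ := hout j hj h3
        intro hEq
        rw [hEq] at h₁
        exact Finset.mem_compl.1 h₂ h₁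
      · exact hd2 i j hi h2 h3
    · exact bot_le
end
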